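/- arXiv:2112.09827 — 3 statements merged into one kernel-verified Lean document; each statement's English description precedes it below -/
import Mathlib

section
/- Let H be a real inner product space, N a positive integer, ε ∈ (0,1], and let v_1,…,v_N ∈ H, o ∈ H, R ∈ ℝ, and α, β, ω ∈ ℝ^N satisfy the OC-SVC KKT conditions: ∑_{n=1}^N α_n = 1; α_n + β_n = 1/(N ε) for all n; α_n ≥ 0, β_n ≥ 0, ω_n ≥ 0 for all n; ω_n β_n = 0 for all n; and ‖v_n − o‖² ≤ R² + ω_n for all n. Then the number of indices n with ‖v_n − o‖² ≤ R² is at least (1 − ε) N; i.e., the OC-SVC sphere {v : ‖v − o‖² ≤ R²} covers at least a fraction 1 − ε of the N samples. -/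
/-- Under the OC-SVC KKT conditions, the sphere `{v : ‖v - o‖² ≤ R²}` covers at
least a fraction `1 - ε` of the `N` samples. -/
theorem ocsvc_sphere_covers
    {H : Type*} [NormedAddCommGroup H] [InnerProductSpace ℝ H]
    {N : ℕ} (hN : 0 < N) (ε : ℝ) (hε0 : 0 < ε) (hε1 : ε ≤ 1)
    (v : Fin N → H) (o : H) (R : ℝ) (α β ω : Fin N → ℝ)
    (hsum : ∑ n, α n = 1)
    (hαβ : ∀ n, α n + β n = 1 / ((N : ℝ) * ε))
    (hα : ∀ n, 0 ≤ α n) (hβ : ∀ n, 0 ≤ β n) (hω : ∀ n, 0 ≤ ω n)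
    (hcs : ∀ n, ω n * β n = 0)
    (hfeas : ∀ n, ‖v n - o‖ ^ 2 ≤ R ^ 2 + ω n) :
    (1 - ε) * (N : ℝ)
      ≤ ((Finset.univ.filter fun n : Fin N => ‖v n - o‖ ^ 2 ≤ R ^ 2).card : ℝ) := by
  set P : Fin N → Prop := fun n => ‖v n - o‖ ^ 2 ≤ R ^ 2 with hP
  have hNε : 0 < (N : ℝ) * ε := by positivity
  -- On the complement set, α n = 1/(Nε)
  have key : ∀ n ∈ Finset.univ.filter (fun n => ¬ P n), α n = 1 / ((N : ℝ) * ε) := by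
    intro n hn
    simp only [Finset.mem_filter] at hn
    have hωpos : 0 < ω n := by
      by_contra h
      have : ω n = 0 := le_antisymm (not_lt.mp h) (hω n)
      exact hn.2 (by simpa [hP, this] using hfeas n)
    have hβ0 : β n = 0 := by
      rcases mul_eq_zero.mp (hcs n) with h | h
      · exact absurd h hωpos.ne'
      · exact h
    have := hαβ n
    linarith
  have hcard : ((Finset.univ.filter (fun n => ¬ P n)).card : ℝ) * (1 / ((N : ℝ) * ε)) ≤ 1 := by
    calc ((Finset.univ.filter (fun n => ¬ P n)).card : ℝ) * (1 / ((N : ℝ) * ε))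
        = ∑ n ∈ Finset.univ.filter (fun n => ¬ P n), α n := by
          rw [Finset.sum_congr rfl key, Finset.sum_const, nsmul_eq_mul]
      _ ≤ ∑ n, α n := Finset.sum_le_sum_of_subset_of_nonneg (Finset.filter_subset _ _)
          (fun n _ _ => hα n)
      _ = 1 := hsum
  have hle : ((Finset.univ.filter (fun n => ¬ P n)).card : ℝ) ≤ (N : ℝ) * ε := by
    have := mul_le_mul_of_nonneg_right hcard (le_of_lt hNε)
    rw [one_mul, mul_assoc, one_div, inv_mul_cancel₀ hNε.ne', mul_one] at this
    exact this
  have hsplit : ((Finset.univ.filter P).card : ℝ)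
      + ((Finset.univ.filter (fun n => ¬ P n)).card : ℝ) = (N : ℝ) := by
    have := Finset.card_filter_add_card_filter_not (s := (Finset.univ : Finset (Fin N))) (p := P)
    have h2 : (Finset.univ : Finset (Fin N)).card = N := by simp
    rw [h2] at this
    exact_mod_cast this
  nlinarith [hle, hsplit]
end

section
/- Let D and N be positive integers, W a D×D real matrix, α ∈ ℝ^N with α_n ≥ 0 for all n, ξ^(1),…,ξ^(N) ∈ ℝ^D, γ ∈ ℝ, and let U := {ξ ∈ ℝ^D : ∑_{n=1}^N α_n ‖W(ξ − ξ^(n))‖₁ ≤ γ}. Let a ∈ ℝ^D and β ∈ ℝ. Suppose there exist π ∈ ℝ with π ≥ 0 and vectors ρ_1,…,ρ_N, μ_1,…,μ_N ∈ ℝ^D with ρ_n ≥ 0 and μ_n ≥ 0 componentwise, such that ρ_n + μ_n = π α_n 𝟙 for all n (𝟙 the all-ones vector), ∑_{n=1}^N Wᵀ(ρ_n − μ_n) = a, and ∑_{n=1}^N (ρ_n − μ_n)ᵀ W ξ^(n) + π γ ≤ β. Then aᵀξ ≤ β for every ξ ∈ U. (Weak duality: feasibility of the linear dual system certifies the robust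 constraint.) -/
open Matrix

/-- The ℓ¹ norm on `ℝ^D`. -/
def l1norm {D : ℕ} (v : Fin D → ℝ) : ℝ := ∑ d, |v d|

/-- Weak duality: feasibility of the linear dual system (multipliers `π, ρ_n, μ_n`)
certifies the robust constraint `aᵀξ ≤ β` for every `ξ` in the OC-SVC uncertainty
set `U = {ξ : ∑_n α_n ‖W(ξ - ξ^(n))‖₁ ≤ γ}`. -/
theorem ocsvc_robust_weak_duality
    {D N : ℕ} (hD : 0 < D) (hN : 0 < N)
    (W : Matrix (Fin D) (Fin D) ℝ)
    (α : Fin N → ℝ) (hα : ∀ n, 0 ≤ α n)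
    (ξs : Fin N → Fin D → ℝ) (γ : ℝ)
    (a : Fin D → ℝ) (β : ℝ)
    (π : ℝ) (hπ : 0 ≤ π)
    (ρ μ : Fin N → Fin D → ℝ)
    (hρ : ∀ n d, 0 ≤ ρ n d) (hμ : ∀ n d, 0 ≤ μ n d)
    (hρμ : ∀ n d, ρ n d + μ n d = π * α n)
    (heq : ∑ n, W.transpose.mulVec (ρ n - μ n) = a)
    (hobj : ∑ n, (ρ n - μ n) ⬝ᵥ W.mulVec (ξs n) + π * γ ≤ β) :
    ∀ ξ : Fin D → ℝ, ∑ n, α n * l1norm (W.mulVec (ξ - ξs n)) ≤ γ → a ⬝ᵥ ξ ≤ β := by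
  intro ξ hξ
  have h1 : a ⬝ᵥ ξ = ∑ n, (ρ n - μ n) ⬝ᵥ W.mulVec ξ := by
    have hsum : (∑ n, W.transpose.mulVec (ρ n - μ n)) ⬝ᵥ ξ
        = ∑ n, (W.transpose.mulVec (ρ n - μ n)) ⬝ᵥ ξ := by
      simp only [dotProduct, Finset.sum_apply, Finset.sum_mul]
      exact Finset.sum_comm
    rw [← heq, hsum]
    refine Finset.sum_congr rfl fun n _ => ?_
    rw [Matrix.mulVec_transpose, ← Matrix.dotProduct_mulVec]
  have h2 : ∀ n, (ρ n - μ n) ⬝ᵥ W.mulVec ξ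
      = (ρ n - μ n) ⬝ᵥ W.mulVec (ξ - ξs n) + (ρ n - μ n) ⬝ᵥ W.mulVec (ξs n) := by
    intro n
    rw [Matrix.mulVec_sub, dotProduct_sub]
    ring
  have hterm : ∀ n, (ρ n - μ n) ⬝ᵥ W.mulVec (ξ - ξs n)
      ≤ π * (α n * l1norm (W.mulVec (ξ - ξs n))) := by
    intro n
    unfold l1norm
    rw [dotProduct, ← mul_assoc, Finset.mul_sum]
    refine Finset.sum_le_sum fun d _ => ?_
    have habs : |ρ n d - μ n d| ≤ π * α n := by
      have h := hρμ n d
      have h1 := hρ n d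
      have h2 := hμ n d
      rw [abs_le]; constructor <;> linarith
    calc (ρ n - μ n) d * (W.mulVec (ξ - ξs n)) d
        ≤ |(ρ n - μ n) d * (W.mulVec (ξ - ξs n)) d| := le_abs_self _
      _ = |ρ n d - μ n d| * |(W.mulVec (ξ - ξs n)) d| := by
          rw [abs_mul]; rfl
      _ ≤ π * α n * |(W.mulVec (ξ - ξs n)) d| :=
          mul_le_mul_of_nonneg_right habs (abs_nonneg _)
  have h3 : ∑ n, (ρ n - μ n) ⬝ᵥ W.mulVec (ξ - ξs n)
      ≤ π * ∑ n, α n * l1norm (W.mulVec (ξ - ξs n)) := by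
    rw [Finset.mul_sum]
    exact Finset.sum_le_sum fun n _ => hterm n
  have h4 : π * ∑ n, α n * l1norm (W.mulVec (ξ - ξs n)) ≤ π * γ :=
    mul_le_mul_of_nonneg_left hξ hπ
  calc a ⬝ᵥ ξ
      = ∑ n, ((ρ n - μ n) ⬝ᵥ W.mulVec (ξ - ξs n) + (ρ n - μ n) ⬝ᵥ W.mulVec (ξs n)) := by
        rw [h1]; exact Finset.sum_congr rfl fun n _ => h2 n
    _ = (∑ n, (ρ n - μ n) ⬝ᵥ W.mulVec (ξ - ξs n)) + ∑ n, (ρ n - μ n) ⬝ᵥ W.mulVec (ξs n) :=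
        Finset.sum_add_distrib
    _ ≤ β := by linarith
end

section
/- Let D and N be positive integers, W a D×D real matrix, α ∈ ℝ^N with α_n ≥ 0 for all n, ξ^(1),…,ξ^(N) ∈ ℝ^D, γ ∈ ℝ, and let U := {ξ ∈ ℝ^D : ∑_{n=1}^N α_n ‖W(ξ − ξ^(n))‖₁ ≤ γ} be nonempty. Let a ∈ ℝ^D and β ∈ ℝ. Then aᵀξ ≤ β holds for every ξ ∈ U if and only if there exist π ∈ ℝ with π ≥ 0 and vectors ρ_1,…,ρ_N, μ_1,…,μ_N ∈ ℝ^D with ρ_n ≥ 0 and μ_n ≥ 0 componentwise, such that ρ_n + μ_n = π α_n 𝟙 for all n (𝟙 the all-ones vector), ∑_{n=1}^N Wᵀ(ρ_n − μ_n) = a, and ∑_{n=1}^N (ρ_n − μ_n)ᵀ W ξ^(n) + π γ ≤ β. (Strong linear-programming duality: the robust constraint over the OC-SVC uncertainty set admits an exact linear counterpart.) -/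
open Matrix

section OCSVCProof
open Finset

lemma isClosed_coneCombos {E : Type*} [NormedAddCommGroup E] [NormedSpace ℝ E]
    [FiniteDimensional ℝ E] {ι : Type*} [Fintype ι] [DecidableEq ι] (v : ι → E) (T : Finset ι) :
    IsClosed {x : E | ∃ c : ι → ℝ, (∀ i, 0 ≤ c i) ∧ x = ∑ i ∈ T, c i • v i} := by
  induction T using Finset.strongInduction with
  | _ T ih =>
    by_cases hind : LinearIndependent ℝ (fun i : ↥T => v i)
    · have hker : LinearMap.ker (Fintype.linearCombination ℝ (fun i : ↥T => v i)) = ⊥ := by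
        rw [LinearMap.ker_eq_bot']
        intro g hg
        rw [Fintype.linearCombination_apply] at hg
        funext i
        exact Fintype.linearIndependent_iff.mp hind g hg i
      have hemb := LinearMap.isClosedEmbedding_of_injective hker
      have himg : {x : E | ∃ c : ι → ℝ, (∀ i, 0 ≤ c i) ∧ x = ∑ i ∈ T, c i • v i}
          = (Fintype.linearCombination ℝ (fun i : ↥T => v i)) ''
            {c : ↥T → ℝ | ∀ i, 0 ≤ c i} := by
        ext x
        constructor
        · rintro ⟨c, hc, rfl⟩
          refine ⟨fun i => c i, fun i => hc i, ?_⟩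
          rw [Fintype.linearCombination_apply, Finset.sum_coe_sort T (fun i => c i • v i)]
        · rintro ⟨c, hc, rfl⟩
          refine ⟨fun i => if h : i ∈ T then c ⟨i, h⟩ else 0, fun i => ?_, ?_⟩
          · by_cases h : i ∈ T
            · simpa [h] using hc ⟨i, h⟩
            · simp [h]
          · rw [Fintype.linearCombination_apply,
              ← Finset.sum_coe_sort T (fun i => (if h : i ∈ T then c ⟨i, h⟩ else 0) • v i)]
            exact Finset.sum_congr rfl (fun i _ => by simp)
      rw [himg]
      refine hemb.isClosedMap _ ?_
      have : {c : ↥T → ℝ | ∀ i, 0 ≤ c i} = Set.pi Set.univ (fun _ => Set.Ici (0:ℝ)) :=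
        Set.ext fun c => ⟨fun h i _ => h i, fun h i => h i (Set.mem_univ i)⟩
      rw [this]
      exact isClosed_set_pi (fun i _ => isClosed_Ici)
    · obtain ⟨g₀, hg₀sum, i₀, hi₀⟩ := Fintype.not_linearIndependent_iff.mp hind
      set g₁ : ι → ℝ := fun i => if h : i ∈ T then g₀ ⟨i, h⟩ else 0 with hg₁def
      have hg₁sum : ∑ i ∈ T, g₁ i • v i = 0 := by
        rw [← Finset.sum_coe_sort T (fun i => g₁ i • v i)]
        rw [show (∑ i : ↥T, g₁ ↑i • v ↑i) = ∑ i : ↥T, g₀ i • v i from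
          Finset.sum_congr rfl (fun i _ => by simp [hg₁def])]
        exact hg₀sum
      have hg₁i₀ : g₁ ↑i₀ ≠ 0 := by simp [hg₁def, hi₀]
      obtain ⟨g, hgsum, hgT, j₁, hj₁T, hj₁⟩ :
          ∃ g : ι → ℝ, ∑ i ∈ T, g i • v i = 0 ∧ (∀ i, i ∉ T → g i = 0) ∧
            ∃ j, j ∈ T ∧ 0 < g j := by
        rcases lt_or_gt_of_ne hg₁i₀ with h | h
        · refine ⟨-g₁, by simp [hg₁sum], fun i hi => by simp [hg₁def, hi], ↑i₀, i₀.2, by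
            simpa using h⟩
        · exact ⟨g₁, hg₁sum, fun i hi => by simp [hg₁def, hi], ↑i₀, i₀.2, h⟩
      set P : Finset ι := T.filter (fun i => 0 < g i) with hPdef
      have hPne : P.Nonempty := ⟨j₁, Finset.mem_filter.mpr ⟨hj₁T, hj₁⟩⟩
      have hSeq : {x : E | ∃ c : ι → ℝ, (∀ i, 0 ≤ c i) ∧ x = ∑ i ∈ T, c i • v i}
          = ⋃ j ∈ P, {x : E | ∃ c : ι → ℝ, (∀ i, 0 ≤ c i) ∧ x = ∑ i ∈ T.erase j, c i • v i} := by
        ext x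
        simp only [Set.mem_setOf_eq, Set.mem_iUnion]
        constructor
        · rintro ⟨c, hc, rfl⟩
          obtain ⟨j, hjP, hjmin⟩ := Finset.exists_min_image P (fun i => c i / g i) hPne
          have hjT : j ∈ T := Finset.mem_of_mem_filter j hjP
          have hgj : 0 < g j := (Finset.mem_filter.mp hjP).2
          set t : ℝ := c j / g j with htdef
          have ht : 0 ≤ t := div_nonneg (hc j) hgj.le
          set c' : ι → ℝ := fun i => if i ∈ T then c i - t * g i else 0 with hc'def
          have hc'nn : ∀ i, 0 ≤ c' i := by
            intro i
            by_cases hiT : i ∈ T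
            · simp only [hc'def, if_pos hiT]
              by_cases hgi : 0 < g i
              · have := hjmin i (Finset.mem_filter.mpr ⟨hiT, hgi⟩)
                have := (le_div_iff₀ hgi).mp this
                linarith
              · push_neg at hgi
                nlinarith [hc i, mul_nonneg ht (neg_nonneg.mpr hgi)]
            · simp [hc'def, hiT]
          have hc'j : c' j = 0 := by
            simp only [hc'def, if_pos hjT, htdef]
            field_simp
            ring
          refine ⟨j, hjP, c', hc'nn, ?_⟩
          have hsum' : ∑ i ∈ T, c' i • v i = ∑ i ∈ T, c i • v i := by
            have : ∑ i ∈ T, c' i • v i = ∑ i ∈ T, (c i • v i - (t * g i) • v i) := by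
              refine Finset.sum_congr rfl (fun i hi => ?_)
              simp [hc'def, if_pos hi, sub_smul]
            rw [this, Finset.sum_sub_distrib]
            have : ∑ i ∈ T, (t * g i) • v i = t • ∑ i ∈ T, g i • v i := by
              rw [Finset.smul_sum]
              exact Finset.sum_congr rfl (fun i _ => by rw [smul_smul])
            rw [this, hgsum, smul_zero, sub_zero]
          rw [Finset.sum_erase T (by rw [hc'j, zero_smul]), hsum']
        · rintro ⟨j, hjP, c, hc, rfl⟩
          refine ⟨Function.update c j 0, fun i => ?_, ?_⟩
          · by_cases hij : i = j
            · rw [hij, Function.update_self]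
            · rw [Function.update_of_ne hij]; exact hc i
          · have heq : ∑ i ∈ T.erase j, c i • v i
                = ∑ i ∈ T.erase j, Function.update c j 0 i • v i :=
              Finset.sum_congr rfl fun i hi =>
                by rw [Function.update_of_ne (Finset.ne_of_mem_erase hi)]
            rw [heq]
            exact Finset.sum_erase (f := fun i => Function.update c j 0 i • v i) (a := j) T
              (by show Function.update c j 0 j • v j = 0; rw [Function.update_self, zero_smul])
      rw [hSeq]
      exact Set.Finite.isClosed_biUnion P.finite_toSet
        (fun j hj => ih _ (Finset.erase_ssubset (Finset.mem_of_mem_filter j hj)))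

lemma affine_farkas {D : ℕ} {ι : Type*} [Fintype ι] [DecidableEq ι]
    (ℓ : ι → (Fin D → ℝ)) (b : ι → ℝ) (a : Fin D → ℝ) (β : ℝ)
    (hfeas : ∃ x : Fin D → ℝ, ∀ i, ℓ i ⬝ᵥ x ≤ b i)
    (himp : ∀ x : Fin D → ℝ, (∀ i, ℓ i ⬝ᵥ x ≤ b i) → a ⬝ᵥ x ≤ β) :
    ∃ lam : ι → ℝ, (∀ i, 0 ≤ lam i) ∧ (∀ d, ∑ i, lam i * ℓ i d = a d) ∧
      ∑ i, lam i * b i ≤ β := by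
  classical
  set w : Option ι → (Fin D → ℝ) × ℝ :=
    fun o => Option.elim o ((0 : Fin D → ℝ), (1 : ℝ)) (fun i => (ℓ i, b i)) with hw
  set S : Set ((Fin D → ℝ) × ℝ) :=
    {z | ∃ c : Option ι → ℝ, (∀ i, 0 ≤ c i) ∧ z = ∑ i ∈ Finset.univ, c i • w i} with hS
  have hSclosed : IsClosed S := isClosed_coneCombos w Finset.univ
  have hSconv : Convex ℝ S := by
    rintro z₁ ⟨c₁, hc₁, rfl⟩ z₂ ⟨c₂, hc₂, rfl⟩ s t hs ht hst
    refine ⟨fun i => s * c₁ i + t * c₂ i,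
      fun i => add_nonneg (mul_nonneg hs (hc₁ i)) (mul_nonneg ht (hc₂ i)), ?_⟩
    rw [Finset.smul_sum, Finset.smul_sum, ← Finset.sum_add_distrib]
    refine Finset.sum_congr rfl fun i _ => ?_
    rw [add_smul, smul_smul, smul_smul]
  have hgen : ∀ o, w o ∈ S := by
    intro o
    refine ⟨fun i => if i = o then 1 else 0, fun i => by by_cases h : i = o <;> simp [h], ?_⟩
    rw [show (∑ i ∈ Finset.univ, (if i = o then (1:ℝ) else 0) • w i)
        = ∑ i ∈ Finset.univ, (if i = o then w i else 0) from
      Finset.sum_congr rfl fun i _ => by split <;> simp]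
    rw [Finset.sum_ite_eq' Finset.univ o w]
    simp
  have hmemS : ((a, β) : (Fin D → ℝ) × ℝ) ∈ S := by
    by_contra hnot
    obtain ⟨f, u, hfS, hfab⟩ := geometric_hahn_banach_closed_point hSconv hSclosed hnot
    have h0S : (0 : (Fin D → ℝ) × ℝ) ∈ S := ⟨0, fun i => le_refl 0, by simp⟩
    have hu : 0 < u := by simpa using hfS 0 h0S
    have hfle : ∀ z ∈ S, f z ≤ 0 := by
      intro z hz
      by_contra hpos
      push_neg at hpos
      have htz : (u / f z + 1) • z ∈ S := by
        obtain ⟨c, hc, hzeq⟩ := hz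
        have hco : 0 ≤ u / f z := (div_pos hu hpos).le
        refine ⟨fun i => (u / f z + 1) * c i,
          fun i => mul_nonneg (by linarith) (hc i), ?_⟩
        rw [hzeq, Finset.smul_sum]
        exact Finset.sum_congr rfl fun i _ => by dsimp only; rw [smul_smul]
      have h1 := hfS _ htz
      rw [_root_.map_smul, smul_eq_mul] at h1
      have h2 : (u / f z + 1) * f z = u + f z := by field_simp
      nlinarith
    set y : Fin D → ℝ := fun d => -f (Pi.single d 1, 0) with hy
    set τ : ℝ := -f (0, 1) with hτdef
    have hrep : ∀ (x : Fin D → ℝ) (t : ℝ), f (x, t) = -(x ⬝ᵥ y) - t * τ := by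
      intro x t
      have hx : (∑ d, x d • ((Pi.single d 1 : Fin D → ℝ), (0:ℝ))) = (x, 0) := by
        rw [Prod.ext_iff]
        constructor
        · rw [Prod.fst_sum]
          funext e
          rw [Finset.sum_apply]
          simp [Pi.single_apply, mul_ite]
        · rw [Prod.snd_sum]
          simp
      have hdec : ((x, t) : (Fin D → ℝ) × ℝ)
          = (∑ d, x d • ((Pi.single d 1 : Fin D → ℝ), (0:ℝ)))
            + t • ((0 : Fin D → ℝ), (1 : ℝ)) := by
        rw [hx]
        ext <;> simp
      rw [hdec, map_add, map_sum]
      simp only [_root_.map_smul, smul_eq_mul]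
      have h1 : ∀ d, f ((Pi.single d 1 : Fin D → ℝ), (0:ℝ)) = -y d := fun d => by simp [hy]
      have h2 : f ((0 : Fin D → ℝ), (1:ℝ)) = -τ := by simp [hτdef]
      simp only [h1, h2, dotProduct, mul_neg]
      rw [← Finset.sum_neg_distrib]
      ring
    have hτ : 0 ≤ τ := by
      have h := hfle (w none) (hgen none)
      simp only [hw, Option.elim] at h
      rw [hrep 0 1] at h
      simp only [zero_dotProduct, neg_zero, zero_sub, one_mul] at h
      linarith
    have hyi : ∀ i, 0 ≤ ℓ i ⬝ᵥ y + b i * τ := by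
      intro i
      have h := hfle (w (some i)) (hgen (some i))
      simp only [hw, Option.elim] at h
      rw [hrep (ℓ i) (b i)] at h
      linarith
    have hab : a ⬝ᵥ y + β * τ < 0 := by
      have h := hfab
      rw [hrep a β] at h
      linarith
    rcases eq_or_lt_of_le hτ with hτ0 | hτpos
    · -- τ = 0
      have hyi' : ∀ i, 0 ≤ ℓ i ⬝ᵥ y := fun i => by
        have := hyi i; rw [← hτ0] at this; linarith
      have hab' : a ⬝ᵥ y < 0 := by rw [← hτ0] at hab; linarith
      obtain ⟨x₀, hx₀⟩ := hfeas
      set q : ℝ := -(a ⬝ᵥ y) with hq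
      have hqpos : 0 < q := by rw [hq]; linarith
      set s : ℝ := max 0 ((β + 1 - a ⬝ᵥ x₀) / q) with hs
      have hs0 : 0 ≤ s := le_max_left _ _
      have hfeas' : ∀ i, ℓ i ⬝ᵥ (x₀ - s • y) ≤ b i := by
        intro i
        rw [dotProduct_sub, dotProduct_smul, smul_eq_mul]
        have h1 := mul_nonneg hs0 (hyi' i)
        have h2 := hx₀ i
        linarith
      have hfin := himp _ hfeas'
      rw [dotProduct_sub, dotProduct_smul, smul_eq_mul] at hfin
      have hsq : (β + 1 - a ⬝ᵥ x₀) ≤ s * q := by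
        have h1 : (β + 1 - a ⬝ᵥ x₀) / q ≤ s := le_max_right _ _
        have h2 := mul_le_mul_of_nonneg_right h1 hqpos.le
        rwa [div_mul_cancel₀ _ hqpos.ne'] at h2
      have h3 : a ⬝ᵥ x₀ - s * (a ⬝ᵥ y) = a ⬝ᵥ x₀ + s * q := by rw [hq]; ring
      linarith
    · -- τ > 0
      have hfeas' : ∀ i, ℓ i ⬝ᵥ ((-τ⁻¹) • y) ≤ b i := by
        intro i
        rw [dotProduct_smul, smul_eq_mul]
        have h := hyi i
        have h2 : -(ℓ i ⬝ᵥ y) ≤ b i * τ := by linarith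
        calc -τ⁻¹ * (ℓ i ⬝ᵥ y) = (-(ℓ i ⬝ᵥ y)) * τ⁻¹ := by ring
          _ ≤ (b i * τ) * τ⁻¹ := mul_le_mul_of_nonneg_right h2 (inv_nonneg.mpr hτpos.le)
          _ = b i := by field_simp
      have hfin := himp _ hfeas'
      rw [dotProduct_smul, smul_eq_mul] at hfin
      have h4 := mul_le_mul_of_nonneg_left hfin hτpos.le
      have expand : τ * (-τ⁻¹ * (a ⬝ᵥ y)) = -(τ * τ⁻¹) * (a ⬝ᵥ y) := by ring
      rw [expand, mul_inv_cancel₀ hτpos.ne'] at h4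
      linarith
  obtain ⟨c, hc, hsum⟩ := hmemS
  refine ⟨fun i => c (some i), fun i => hc (some i), ?_, ?_⟩
  · intro d
    have h1 := congrArg Prod.fst hsum
    rw [Prod.fst_sum] at h1
    have h1d := congrFun h1 d
    rw [Finset.sum_apply] at h1d
    rw [show (∑ i : Option ι, ((c i • w i).1) d) = ∑ i : Option ι, c i * (w i).1 d from
      Finset.sum_congr rfl fun i _ => rfl] at h1d
    rw [Fintype.sum_option] at h1d
    simp only [hw, Option.elim] at h1d
    rw [h1d]
    simp
  · have h2 := congrArg Prod.snd hsum
    rw [Prod.snd_sum] at h2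
    rw [show (∑ i : Option ι, (c i • w i).2) = ∑ i : Option ι, c i * (w i).2 from
      Finset.sum_congr rfl fun i _ => rfl] at h2
    rw [Fintype.sum_option] at h2
    simp only [hw, Option.elim] at h2
    have h3 := hc none
    rw [h2]
    simp only [mul_one]
    linarith
lemma sum_swap3 {N D : ℕ} {K : Type*} [Fintype K] (f : Fin N → Fin D → K → ℝ) :
    ∑ n, ∑ e, ∑ k, f n e k = ∑ k, ∑ n, ∑ e, f n e k := by
  rw [show (∑ n, ∑ e, ∑ k, f n e k) = ∑ n, ∑ k, ∑ e, f n e k from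
    Finset.sum_congr rfl fun n _ => Finset.sum_comm]
  exact Finset.sum_comm

lemma mul_sum_sum {N D : ℕ} (r : ℝ) (g : Fin N → ℝ) (h : Fin N → Fin D → ℝ) :
    ∑ n, ∑ e, r * (g n * h n e) = r * ∑ n, g n * ∑ e, h n e := by
  rw [Finset.mul_sum]
  refine Finset.sum_congr rfl fun n _ => ?_
  rw [Finset.mul_sum, Finset.mul_sum]


/-- Strong linear-programming duality: for a nonempty OC-SVC uncertainty set
`U = {ξ : ∑_n α_n ‖W(ξ - ξ^(n))‖₁ ≤ γ}`, the robust constraint `aᵀξ ≤ β` for all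
`ξ ∈ U` holds iff the linear dual system in the multipliers `π, ρ_n, μ_n` is
feasible. -/
theorem ocsvc_robust_strong_duality
    {D N : ℕ} (hD : 0 < D) (hN : 0 < N)
    (W : Matrix (Fin D) (Fin D) ℝ)
    (α : Fin N → ℝ) (hα : ∀ n, 0 ≤ α n)
    (ξs : Fin N → Fin D → ℝ) (γ : ℝ)
    (hU : {ξ : Fin D → ℝ | ∑ n, α n * l1norm (W.mulVec (ξ - ξs n)) ≤ γ}.Nonempty)
    (a : Fin D → ℝ) (β : ℝ) :
    (∀ ξ : Fin D → ℝ, ∑ n, α n * l1norm (W.mulVec (ξ - ξs n)) ≤ γ → a ⬝ᵥ ξ ≤ β)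
      ↔ ∃ (π : ℝ) (ρ μ : Fin N → Fin D → ℝ),
          0 ≤ π ∧
          (∀ n d, 0 ≤ ρ n d) ∧ (∀ n d, 0 ≤ μ n d) ∧
          (∀ n d, ρ n d + μ n d = π * α n) ∧
          (∑ n, W.transpose.mulVec (ρ n - μ n) = a) ∧
          (∑ n, (ρ n - μ n) ⬝ᵥ W.mulVec (ξs n) + π * γ ≤ β) := by
  classical
  set sgn : Bool → ℝ := fun s => if s then 1 else -1 with hsgn
  have hsgn_le : ∀ (s : Bool) (r : ℝ), sgn s * r ≤ |r| := by
    intro s r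
    cases s <;> simp [hsgn] <;> [exact neg_le_abs r; exact le_abs_self r]
  set ℓ : (Fin N → Fin D → Bool) → Fin D → ℝ :=
    fun σ d => ∑ n, α n * ∑ e, W e d * sgn (σ n e) with hℓ
  set b : (Fin N → Fin D → Bool) → ℝ :=
    fun σ => γ + ∑ n, α n * ∑ e, sgn (σ n e) * W.mulVec (ξs n) e with hb
  -- dot product formula
  have hdot : ∀ (σ : Fin N → Fin D → Bool) (ξ : Fin D → ℝ),
      ℓ σ ⬝ᵥ ξ = ∑ n, α n * ∑ e, sgn (σ n e) * W.mulVec ξ e := by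
    intro σ ξ
    simp only [hℓ, dotProduct, Matrix.mulVec, dotProduct, Finset.sum_mul, Finset.mul_sum]
    rw [Finset.sum_comm]
    refine Finset.sum_congr rfl fun n _ => ?_
    rw [Finset.sum_comm]
    refine Finset.sum_congr rfl fun e _ => Finset.sum_congr rfl fun d _ => by ring
  -- key identity
  have hkey : ∀ (σ : Fin N → Fin D → Bool) (ξ : Fin D → ℝ),
      ℓ σ ⬝ᵥ ξ - b σ + γ = ∑ n, α n * ∑ e, sgn (σ n e) * W.mulVec (ξ - ξs n) e := by
    intro σ ξ
    rw [hdot]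
    simp only [hb, Matrix.mulVec_sub, Pi.sub_apply, mul_sub, Finset.sum_sub_distrib]
    ring
  -- equivalence of the two descriptions of U
  have hequiv : ∀ ξ : Fin D → ℝ,
      (∑ n, α n * l1norm (W.mulVec (ξ - ξs n)) ≤ γ) ↔
        ∀ σ : Fin N → Fin D → Bool, ℓ σ ⬝ᵥ ξ ≤ b σ := by
    intro ξ
    constructor
    · intro hg σ
      have h1 : ∑ n, α n * ∑ e, sgn (σ n e) * W.mulVec (ξ - ξs n) e
          ≤ ∑ n, α n * l1norm (W.mulVec (ξ - ξs n)) := by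
        refine Finset.sum_le_sum fun n _ => mul_le_mul_of_nonneg_left ?_ (hα n)
        exact Finset.sum_le_sum fun e _ => hsgn_le _ _
      have h2 := hkey σ ξ
      linarith
    · intro hs
      set σ : Fin N → Fin D → Bool := fun n e => decide (0 ≤ W.mulVec (ξ - ξs n) e) with hσ
      have heq : ∑ n, α n * ∑ e, sgn (σ n e) * W.mulVec (ξ - ξs n) e
          = ∑ n, α n * l1norm (W.mulVec (ξ - ξs n)) := by
        refine Finset.sum_congr rfl fun n _ => ?_
        unfold l1norm
        congr 1
        refine Finset.sum_congr rfl fun e _ => ?_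
        by_cases h : 0 ≤ W.mulVec (ξ - ξs n) e
        · simp [hσ, hsgn, h, abs_of_nonneg h]
        · push_neg at h
          simp [hσ, hsgn, not_le.mpr h, abs_of_neg h]
      have h2 := hkey σ ξ
      have h3 := hs σ
      linarith
  constructor
  · -- strong duality direction
    intro himp
    obtain ⟨ξ₀, hξ₀⟩ := hU
    obtain ⟨lam, hlam, hlamℓ, hlamb⟩ := affine_farkas ℓ b a β
      ⟨ξ₀, (hequiv ξ₀).mp hξ₀⟩
      (fun x hx => himp x ((hequiv x).mpr hx))
    set π : ℝ := ∑ σ, lam σ with hπdef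
    have hπ : 0 ≤ π := Finset.sum_nonneg fun σ _ => hlam σ
    set sb : Fin N → Fin D → ℝ := fun n d => ∑ σ, lam σ * (α n * sgn (σ n d)) with hsb
    have hub : ∀ n d, sb n d ≤ π * α n := by
      intro n d
      rw [hπdef, Finset.sum_mul]
      refine Finset.sum_le_sum fun σ _ => ?_
      refine mul_le_mul_of_nonneg_left ?_ (hlam σ)
      cases h : σ n d <;> simp [hsgn] <;> linarith [hα n]
    have hlb : ∀ n d, -(π * α n) ≤ sb n d := by
      intro n d
      rw [hπdef, Finset.sum_mul, ← Finset.sum_neg_distrib]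
      refine Finset.sum_le_sum fun σ _ => ?_
      rw [← mul_neg]
      refine mul_le_mul_of_nonneg_left ?_ (hlam σ)
      cases h : σ n d <;> simp [hsgn] <;> linarith [hα n]
    refine ⟨π, fun n d => (π * α n + sb n d) / 2, fun n d => (π * α n - sb n d) / 2,
      hπ, fun n d => by have := hlb n d; dsimp only; linarith,
      fun n d => by have := hub n d; dsimp only; linarith,
      fun n d => by dsimp only; ring, ?_, ?_⟩
    · -- ∑ n, Wᵀ *ᵥ (ρ n - μ n) = a
      funext d
      rw [Finset.sum_apply]
      have hdiff : ∀ n, ((fun d => (π * α n + sb n d) / 2) - fun d => (π * α n - sb n d) / 2)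
          = sb n := by
        intro n; funext e; simp; ring
      calc ∑ n, (Wᵀ *ᵥ ((fun d => (π * α n + sb n d) / 2) - fun d => (π * α n - sb n d) / 2)) d
          = ∑ n, ∑ e, W e d * sb n e := by
            refine Finset.sum_congr rfl fun n _ => ?_
            rw [hdiff n]
            simp [Matrix.mulVec, dotProduct, Matrix.transpose_apply]
        _ = ∑ n, ∑ e, ∑ σ, lam σ * (α n * (W e d * sgn (σ n e))) := by
            refine Finset.sum_congr rfl fun n _ => Finset.sum_congr rfl fun e _ => ?_
            simp only [hsb]
            rw [Finset.mul_sum]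
            exact Finset.sum_congr rfl fun σ _ => by ring
        _ = ∑ σ, ∑ n, ∑ e, lam σ * (α n * (W e d * sgn (σ n e))) :=
            sum_swap3 _
        _ = ∑ σ, lam σ * ℓ σ d := by
            refine Finset.sum_congr rfl fun σ _ => ?_
            simp only [hℓ]
            exact mul_sum_sum (lam σ) α (fun n e => W e d * sgn (σ n e))
        _ = a d := hlamℓ d
    · -- value bound
      have hval : ∑ n, ((fun d => (π * α n + sb n d) / 2) - fun d => (π * α n - sb n d) / 2)
            ⬝ᵥ W.mulVec (ξs n) + π * γ
          = ∑ σ, lam σ * b σ := by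
        have h1 : ∀ n, ((fun d => (π * α n + sb n d) / 2) - fun d => (π * α n - sb n d) / 2)
            ⬝ᵥ W.mulVec (ξs n) = ∑ e, sb n e * W.mulVec (ξs n) e := by
          intro n
          refine Finset.sum_congr rfl fun e _ => ?_
          simp only [Pi.sub_apply]
          ring
        calc (∑ n, ((fun d => (π * α n + sb n d) / 2) - fun d => (π * α n - sb n d) / 2)
              ⬝ᵥ W.mulVec (ξs n)) + π * γ
            = (∑ n, ∑ e, ∑ σ, lam σ * (α n * (sgn (σ n e) * W.mulVec (ξs n) e)))
              + ∑ σ, lam σ * γ := by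
              rw [hπdef, Finset.sum_mul]
              congr 1
              refine Finset.sum_congr rfl fun n _ => ?_
              rw [h1 n]
              refine Finset.sum_congr rfl fun e _ => ?_
              simp only [hsb]
              rw [Finset.sum_mul]
              exact Finset.sum_congr rfl fun σ _ => by ring
          _ = (∑ σ, ∑ n, ∑ e, lam σ * (α n * (sgn (σ n e) * W.mulVec (ξs n) e)))
              + ∑ σ, lam σ * γ := by rw [sum_swap3]
          _ = ∑ σ, lam σ * b σ := by
              rw [← Finset.sum_add_distrib]
              refine Finset.sum_congr rfl fun σ _ => ?_
              rw [mul_sum_sum (lam σ) α (fun n e => sgn (σ n e) * W.mulVec (ξs n) e)]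
              simp only [hb]
              ring
      rw [hval]
      exact hlamb
  · -- weak duality direction
    rintro ⟨π, ρ, μ, hπ, hρ, hμ, hρμ, hWa, hval⟩ ξ hξ
    have hdotn : ∀ n, (Wᵀ *ᵥ (ρ n - μ n)) ⬝ᵥ ξ = (ρ n - μ n) ⬝ᵥ W.mulVec ξ := by
      intro n
      rw [Matrix.mulVec_transpose, ← Matrix.dotProduct_mulVec]
    have ha : a ⬝ᵥ ξ = ∑ n, (ρ n - μ n) ⬝ᵥ W.mulVec ξ := by
      rw [← hWa]
      rw [show (∑ n, Wᵀ *ᵥ (ρ n - μ n)) ⬝ᵥ ξ = ∑ n, (Wᵀ *ᵥ (ρ n - μ n)) ⬝ᵥ ξ by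
        simp only [dotProduct, Finset.sum_apply, Finset.sum_mul]
        exact Finset.sum_comm]
      exact Finset.sum_congr rfl fun n _ => hdotn n
    have hbnd : ∀ n, (ρ n - μ n) ⬝ᵥ W.mulVec (ξ - ξs n)
        ≤ π * α n * l1norm (W.mulVec (ξ - ξs n)) := by
      intro n
      unfold l1norm
      rw [Finset.mul_sum]
      refine Finset.sum_le_sum fun e _ => ?_
      have h1 := mul_nonneg (hρ n e)
        (sub_nonneg.mpr (le_abs_self (W.mulVec (ξ - ξs n) e)))
      have h2 := mul_nonneg (hμ n e)
        (by linarith [neg_abs_le (W.mulVec (ξ - ξs n) e)] :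
          (0:ℝ) ≤ |W.mulVec (ξ - ξs n) e| + W.mulVec (ξ - ξs n) e)
      have h3 := hρμ n e
      calc (ρ n - μ n) e * W.mulVec (ξ - ξs n) e
          = (ρ n e - μ n e) * W.mulVec (ξ - ξs n) e := by simp
        _ ≤ (ρ n e + μ n e) * |W.mulVec (ξ - ξs n) e| := by nlinarith
        _ = π * α n * |W.mulVec (ξ - ξs n) e| := by rw [h3]
    have hsplit : ∀ n, (ρ n - μ n) ⬝ᵥ W.mulVec ξ
        = (ρ n - μ n) ⬝ᵥ W.mulVec (ξ - ξs n) + (ρ n - μ n) ⬝ᵥ W.mulVec (ξs n) := by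
      intro n
      rw [Matrix.mulVec_sub, dotProduct_sub]
      ring
    have hsum1 : ∑ n, π * α n * l1norm (W.mulVec (ξ - ξs n)) ≤ π * γ := by
      calc ∑ n, π * α n * l1norm (W.mulVec (ξ - ξs n))
          = π * ∑ n, α n * l1norm (W.mulVec (ξ - ξs n)) := by
            rw [Finset.mul_sum]; exact Finset.sum_congr rfl fun n _ => by ring
        _ ≤ π * γ := mul_le_mul_of_nonneg_left hξ hπ
    have hfin : ∑ n, (ρ n - μ n) ⬝ᵥ W.mulVec ξ
        ≤ ∑ n, π * α n * l1norm (W.mulVec (ξ - ξs n))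
          + ∑ n, (ρ n - μ n) ⬝ᵥ W.mulVec (ξs n) := by
      rw [← Finset.sum_add_distrib]
      refine Finset.sum_le_sum fun n _ => ?_
      rw [hsplit n]
      linarith [hbnd n]
    rw [ha]
    linarith

end OCSVCProof
end
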